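/- Let G be a finite simple triangle-free d-regular graph with n ≥ 4 vertices. Then wd(G) > d − √n − 1, where wd(G) denotes the weak degeneracy of G (the inequality is between real numbers, with wd(G) cast into the reals). -/
import Mathlib


open scoped Classical

namespace WeakDeg

variable {V : Type*}

/-- `WeakDegenOn G S f` means: starting from the induced subgraph `G[S]` of `G` with value
function `f`, it is possible to remove all vertices by a sequence of legal applications of the
operations `Delete` and `DelSave`. `Delete(u)` removes `u` and decreases by one the value of
every remaining neighbor of `u`; it is legal if the resulting function is nonnegative on the
remaining vertices. `DelSave(u, w)` (for `w` a neighbor of `u` with `f w < f u`) removes `u` and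
decreases by one the value of every remaining neighbor of `u` except `w`; it is legal if
`f w < f u` and the resulting function is nonnegative on the remaining vertices. -/
inductive WeakDegenOn (G : SimpleGraph V) : Finset V → (V → ℤ) → Prop
  | empty (f : V → ℤ) : WeakDegenOn G ∅ f
  | delete (S : Finset V) (f : V → ℤ) (u : V) (hu : u ∈ S)
      (hleg : ∀ v ∈ S.erase u, 0 ≤ if G.Adj u v then f v - 1 else f v)
      (h : WeakDegenOn G (S.erase u) fun v => if G.Adj u v then f v - 1 else f v) :
      WeakDegenOn G S f
  | delSave (S : Finset V) (f : V → ℤ) (u w : V) (hu : u ∈ S) (hw : w ∈ S)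
      (hadj : G.Adj u w) (hlt : f w < f u)
      (hleg : ∀ v ∈ S.erase u, 0 ≤ if G.Adj u v ∧ v ≠ w then f v - 1 else f v)
      (h : WeakDegenOn G (S.erase u) fun v => if G.Adj u v ∧ v ≠ w then f v - 1 else f v) :
      WeakDegenOn G S f

/-- `G` is weakly `f`-degenerate, for `f : V → ℕ`. -/
def WeaklyDegenerateWith (G : SimpleGraph V) [Fintype V] (f : V → ℕ) : Prop :=
  WeakDegenOn G Finset.univ fun v => (f v : ℤ)

/-- `G` is weakly `d`-degenerate. -/
def WeaklyDegenerate (G : SimpleGraph V) [Fintype V] (d : ℕ) : Prop :=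
  WeaklyDegenerateWith G fun _ => d

/-- The weak degeneracy `wd(G)` of `G`: the least `d` such that `G` is weakly `d`-degenerate. -/
noncomputable def weakDegeneracy (G : SimpleGraph V) [Fintype V] : ℕ :=
  sInf {d : ℕ | WeaklyDegenerate G d}

/-! ### Auxiliary definitions and lemmas -/

/-- `eSum G T U = ∑_{v ∈ T} |N(v) ∩ U|`. -/
noncomputable def eSum (G : SimpleGraph V) (T U : Finset V) : ℕ :=
  ∑ v ∈ T, (U.filter (fun w => G.Adj v w)).card

lemma sum_ite_sub (T : Finset V) (f : V → ℤ) (p : V → Prop) [DecidablePred p] :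
    ∑ v ∈ T, (if p v then f v - 1 else f v)
      = (∑ v ∈ T, f v) - (T.filter p).card := by
  have h1 : ∀ v ∈ T, (if p v then f v - 1 else f v) = f v - (if p v then (1:ℤ) else 0) := by
    intro v _; split_ifs <;> ring
  rw [Finset.sum_congr rfl h1, Finset.sum_sub_distrib, Finset.sum_boole]

lemma filter_adj_comm (G : SimpleGraph V) (T : Finset V) (u : V) :
    T.filter (fun v => G.Adj v u) = T.filter (fun v => G.Adj u v) := by
  apply Finset.filter_congr
  intro v _
  constructor <;> intro h <;> exact h.symm

lemma eSum_insert_right (G : SimpleGraph V) (T U : Finset V) (u : V) (hu : u ∉ U) :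
    eSum G T (insert u U) = eSum G T U + (T.filter (fun v => G.Adj u v)).card := by
  unfold eSum
  have h1 : ∀ v ∈ T, ((insert u U).filter (fun w => G.Adj v w)).card
      = (U.filter (fun w => G.Adj v w)).card + (if G.Adj v u then 1 else 0) := by
    intro v _
    rw [Finset.filter_insert]
    split_ifs with h
    · rw [Finset.card_insert_of_notMem (by simp [hu])]
    · rfl
  rw [Finset.sum_congr rfl h1, Finset.sum_add_distrib]
  have h2 : (∑ v ∈ T, if G.Adj v u then 1 else 0) = (T.filter (fun v => G.Adj v u)).card := by
    rw [Finset.card_filter]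
  rw [h2, filter_adj_comm]

lemma eSum_insert_left (G : SimpleGraph V) (T U : Finset V) (u : V) (hu : u ∉ T) :
    eSum G (insert u T) U = (U.filter (fun w => G.Adj u w)).card + eSum G T U := by
  unfold eSum
  rw [Finset.sum_insert hu]

lemma eSum_empty_right (G : SimpleGraph V) (T : Finset V) : eSum G T ∅ = 0 := by
  simp [eSum]

lemma card_filter_eq_of_iff {s : Finset V} {p q : V → Prop} {h1 : DecidablePred p}
    {h2 : DecidablePred q} (h : ∀ x, p x ↔ q x) :
    (@Finset.filter V p h1 s).card = (@Finset.filter V q h2 s).card :=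
  congrArg Finset.card (Finset.filter_congr fun x _ => h x)

lemma eSum_degree_split (G : SimpleGraph V) [Fintype V] {d : ℕ}
    (hd : ∀ v : V, (Finset.univ.filter (fun w => G.Adj v w)).card = d) (T : Finset V) :
    eSum G T T + eSum G T (Finset.univ \ T) = T.card * d := by
  unfold eSum
  rw [← Finset.sum_add_distrib]
  have hconst : (∑ v ∈ T, ((T.filter (fun w => G.Adj v w)).card
      + ((Finset.univ \ T).filter (fun w => G.Adj v w)).card)) = ∑ _v ∈ T, d := by
    apply Finset.sum_congr rfl
    intro v _
    have hdisj : Disjoint (T.filter (fun w => G.Adj v w))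
        ((Finset.univ \ T).filter (fun w => G.Adj v w)) :=
      Finset.disjoint_filter_filter (Finset.disjoint_sdiff)
    rw [← Finset.card_union_of_disjoint hdisj, ← Finset.filter_union,
      Finset.union_sdiff_of_subset (Finset.subset_univ T)]
    exact hd v
  rw [hconst, Finset.sum_const, smul_eq_mul]

lemma sdiff_eq_insert {S T : Finset V} {u : V} (hu : u ∈ S) (hT : T ⊆ S.erase u) :
    S \ T = insert u ((S.erase u) \ T) := by
  have huT : u ∉ T := fun h => (Finset.mem_erase.mp (hT h)).1 rfl
  ext v
  simp only [Finset.mem_sdiff, Finset.mem_insert, Finset.mem_erase]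
  constructor
  · rintro ⟨hvS, hvT⟩
    by_cases hvu : v = u
    · exact Or.inl hvu
    · exact Or.inr ⟨⟨hvu, hvS⟩, hvT⟩
  · rintro (rfl | ⟨⟨_, hvS⟩, hvT⟩)
    · exact ⟨hu, huT⟩
    · exact ⟨hvS, hvT⟩

lemma filter_and_card {S : Finset V} {p q : V → Prop} [DecidablePred p] [DecidablePred q]
    (w : V) (hq : ∀ v, q v ↔ p v ∧ v ≠ w) :
    (S.filter p).card ≤ (S.filter q).card + 1 := by
  have hsub : S.filter p ⊆ insert w (S.filter q) := by
    intro v hv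
    rw [Finset.mem_filter] at hv
    by_cases hvw : v = w
    · simp [hvw]
    · exact Finset.mem_insert_of_mem (Finset.mem_filter.mpr ⟨hv.1, (hq v).mpr ⟨hv.2, hvw⟩⟩)
  calc (S.filter p).card ≤ (insert w (S.filter q)).card := Finset.card_le_card hsub
    _ ≤ (S.filter q).card + 1 := Finset.card_insert_le _ _

/-- Key potential inequality: `2e(S) ≤ 2 ∑_S f + 2|S|`. -/
lemma lemB {G : SimpleGraph V} {S : Finset V} {f : V → ℤ}
    (h : WeakDegenOn G S f) :
    (∀ v ∈ S, 0 ≤ f v) → (eSum G S S : ℤ) ≤ 2 * (∑ v ∈ S, f v) + 2 * S.card := by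
  induction h with
  | empty f => intro _; simp [eSum_empty_right]
  | delete S f u hu hleg h ih =>
    intro hf
    have huS' : u ∉ S.erase u := Finset.notMem_erase u S
    have hins : insert u (S.erase u) = S := Finset.insert_erase hu
    have hpos : 0 < S.card := Finset.card_pos.mpr ⟨u, hu⟩
    have e1 : eSum G S S = eSum G (S.erase u) (S.erase u)
        + 2 * ((S.erase u).filter (fun v => G.Adj u v)).card := by
      conv_lhs => rw [← hins]
      rw [eSum_insert_left G _ _ u huS', eSum_insert_right G _ _ u huS']
      have h5 : ((insert u (S.erase u)).filter (fun w => G.Adj u w)).card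
          = ((S.erase u).filter (fun v => G.Adj u v)).card := by
        rw [Finset.filter_insert, if_neg (G.irrefl)]
      rw [h5]; ring
    have e2 : ∑ v ∈ S, f v = f u + ∑ v ∈ S.erase u, f v := by
      conv_lhs => rw [← hins]
      rw [Finset.sum_insert huS']
    have e3 : ∑ v ∈ S.erase u, (if G.Adj u v then f v - 1 else f v)
        = (∑ v ∈ S.erase u, f v) - ((S.erase u).filter (fun v => G.Adj u v)).card :=
      sum_ite_sub _ f _
    have e4 : (S.card : ℤ) = (S.erase u).card + 1 := by
      rw [Finset.card_erase_of_mem hu]; omega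
    have hfu : 0 ≤ f u := hf u hu
    have hmain := ih hleg
    rw [e3] at hmain
    rw [e1]
    push_cast at hmain ⊢
    rw [e2, e4]
    linarith
  | delSave S f u w hu hw hadj hlt hleg h ih =>
    intro hf
    have huS' : u ∉ S.erase u := Finset.notMem_erase u S
    have hins : insert u (S.erase u) = S := Finset.insert_erase hu
    have hpos : 0 < S.card := Finset.card_pos.mpr ⟨u, hu⟩
    have e1 : eSum G S S = eSum G (S.erase u) (S.erase u)
        + 2 * ((S.erase u).filter (fun v => G.Adj u v)).card := by
      conv_lhs => rw [← hins]
      rw [eSum_insert_left G _ _ u huS', eSum_insert_right G _ _ u huS']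
      have h5 : ((insert u (S.erase u)).filter (fun w => G.Adj u w)).card
          = ((S.erase u).filter (fun v => G.Adj u v)).card := by
        rw [Finset.filter_insert, if_neg (G.irrefl)]
      rw [h5]; ring
    have e2 : ∑ v ∈ S, f v = f u + ∑ v ∈ S.erase u, f v := by
      conv_lhs => rw [← hins]
      rw [Finset.sum_insert huS']
    have e3 : ∑ v ∈ S.erase u, (if G.Adj u v ∧ v ≠ w then f v - 1 else f v)
        = (∑ v ∈ S.erase u, f v)
          - ((S.erase u).filter (fun v => G.Adj u v ∧ v ≠ w)).card :=
      sum_ite_sub _ f _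
    have e4 : (S.card : ℤ) = (S.erase u).card + 1 := by
      rw [Finset.card_erase_of_mem hu]; omega
    have hcc : ((S.erase u).filter (fun v => G.Adj u v)).card
        ≤ ((S.erase u).filter (fun v => G.Adj u v ∧ v ≠ w)).card + 1 :=
      filter_and_card w (fun v => Iff.rfl)
    have hfw : 0 ≤ f w := hf w hw
    have hfu : 1 ≤ f u := by omega
    have hmain := ih hleg
    rw [e3] at hmain
    rw [e1]
    have hcc' : (((S.erase u).filter (fun v => G.Adj u v)).card : ℤ)
        ≤ ((S.erase u).filter (fun v => G.Adj u v ∧ v ≠ w)).card + 1 := by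
      exact_mod_cast hcc
    push_cast at hmain ⊢
    rw [e2, e4]
    linarith

/-- Main counting lemma: a "tail" set `T` of any size `t ≤ |S|` satisfying
`2e(T) ≤ 2(∑_T f - e(T, S∖T) + |S|)`. -/
lemma lemA {G : SimpleGraph V} {S : Finset V} {f : V → ℤ}
    (h : WeakDegenOn G S f) :
    (∀ v ∈ S, 0 ≤ f v) → ∀ t, t ≤ S.card → ∃ T, T ⊆ S ∧ T.card = t ∧
      (eSum G T T : ℤ) ≤ 2 * ((∑ v ∈ T, f v) - eSum G T (S \ T) + S.card) := by
  induction h with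
  | empty f =>
    intro _ t ht
    simp only [Finset.card_empty, Nat.le_zero] at ht
    refine ⟨∅, Finset.Subset.refl _, by simp [ht], ?_⟩
    simp [eSum_empty_right]
  | delete S f u hu hleg h ih =>
    intro hf t ht
    by_cases htS : t = S.card
    · refine ⟨S, Finset.Subset.refl _, htS.symm, ?_⟩
      rw [Finset.sdiff_self, eSum_empty_right]
      have := lemB (WeakDegenOn.delete S f u hu hleg h) hf
      push_cast at this ⊢
      linarith
    · have huS' : u ∉ S.erase u := Finset.notMem_erase u S
      have hins : insert u (S.erase u) = S := Finset.insert_erase hu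
      have hpos : 0 < S.card := Finset.card_pos.mpr ⟨u, hu⟩
      have hScard : S.card = (S.erase u).card + 1 := by
        rw [Finset.card_erase_of_mem hu]; omega
      have ht' : t ≤ (S.erase u).card := by omega
      obtain ⟨T, hTsub, hTcard, hT⟩ := ih hleg t ht'
      refine ⟨T, hTsub.trans (Finset.erase_subset u S), hTcard, ?_⟩
      have husd : u ∉ (S.erase u) \ T := by
        simp only [Finset.mem_sdiff]
        exact fun h => huS' h.1
      have e5 : eSum G T (S \ T) = eSum G T ((S.erase u) \ T)
          + (T.filter (fun v => G.Adj u v)).card := by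
        rw [sdiff_eq_insert hu hTsub, eSum_insert_right G _ _ u husd]
      have e6 : ∑ v ∈ T, (if G.Adj u v then f v - 1 else f v)
          = (∑ v ∈ T, f v) - (T.filter (fun v => G.Adj u v)).card :=
        sum_ite_sub _ f _
      rw [e6] at hT
      rw [e5]
      push_cast at hT ⊢
      rw [hScard]
      push_cast
      linarith
  | delSave S f u w hu hw hadj hlt hleg h ih =>
    intro hf t ht
    by_cases htS : t = S.card
    · refine ⟨S, Finset.Subset.refl _, htS.symm, ?_⟩
      rw [Finset.sdiff_self, eSum_empty_right]
      have := lemB (WeakDegenOn.delSave S f u w hu hw hadj hlt hleg h) hf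
      push_cast at this ⊢
      linarith
    · have huS' : u ∉ S.erase u := Finset.notMem_erase u S
      have hins : insert u (S.erase u) = S := Finset.insert_erase hu
      have hpos : 0 < S.card := Finset.card_pos.mpr ⟨u, hu⟩
      have hScard : S.card = (S.erase u).card + 1 := by
        rw [Finset.card_erase_of_mem hu]; omega
      have ht' : t ≤ (S.erase u).card := by omega
      obtain ⟨T, hTsub, hTcard, hT⟩ := ih hleg t ht'
      refine ⟨T, hTsub.trans (Finset.erase_subset u S), hTcard, ?_⟩
      have husd : u ∉ (S.erase u) \ T := by
        simp only [Finset.mem_sdiff]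
        exact fun h => huS' h.1
      have e5 : eSum G T (S \ T) = eSum G T ((S.erase u) \ T)
          + (T.filter (fun v => G.Adj u v)).card := by
        rw [sdiff_eq_insert hu hTsub, eSum_insert_right G _ _ u husd]
      have e6 : ∑ v ∈ T, (if G.Adj u v ∧ v ≠ w then f v - 1 else f v)
          = (∑ v ∈ T, f v) - (T.filter (fun v => G.Adj u v ∧ v ≠ w)).card :=
        sum_ite_sub _ f _
      have hcc : (T.filter (fun v => G.Adj u v)).card
          ≤ (T.filter (fun v => G.Adj u v ∧ v ≠ w)).card + 1 :=
        filter_and_card w (fun v => Iff.rfl)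
      have hcc' : ((T.filter (fun v => G.Adj u v)).card : ℤ)
          ≤ (T.filter (fun v => G.Adj u v ∧ v ≠ w)).card + 1 := by
        exact_mod_cast hcc
      rw [e6] at hT
      rw [e5]
      push_cast at hT ⊢
      rw [hScard]
      push_cast
      linarith

/-- Any graph is weakly degenerate w.r.t. any `f` with `f v + 1 ≥ |S|`. -/
lemma lemC (G : SimpleGraph V) :
    ∀ (n : ℕ) (S : Finset V), S.card = n → ∀ f : V → ℤ,
      (∀ v ∈ S, (n : ℤ) ≤ f v + 1) → WeakDegenOn G S f := by
  intro n
  induction n with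
  | zero =>
    intro S hS f _
    rw [Finset.card_eq_zero] at hS
    exact hS ▸ WeakDegenOn.empty f
  | succ n ihn =>
    intro S hS f hf
    have hSne : S.Nonempty := Finset.card_pos.mp (by omega)
    obtain ⟨u, hu⟩ := hSne
    have hcard : (S.erase u).card = n := by
      rw [Finset.card_erase_of_mem hu, hS]; omega
    refine WeakDegenOn.delete S f u hu ?_ ?_
    · intro v hv
      have hvpos : 0 < (S.erase u).card := Finset.card_pos.mpr ⟨v, hv⟩
      have h1 := hf v (Finset.erase_subset u S hv)
      push_cast at h1
      split_ifs <;> omega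
    · refine ihn (S.erase u) hcard _ ?_
      intro v hv
      have h1 := hf v (Finset.erase_subset u S hv)
      push_cast at h1 ⊢
      split_ifs <;> omega

/-- Mantel's theorem, in the form `2 ∑_{v∈T} |N(v) ∩ T| ≤ |T|²`. -/
lemma mantel {G : SimpleGraph V} (htf : G.CliqueFree 3) (T : Finset V) :
    2 * eSum G T T ≤ T.card ^ 2 := by
  set dT : V → ℕ := fun v => (T.filter (fun w => G.Adj v w)).card with hdT
  have key : ∀ v ∈ T, ∀ w ∈ T, G.Adj v w → dT v + dT w ≤ T.card := by
    intro v _ w _ hvw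
    have hdisj : Disjoint (T.filter (fun x => G.Adj v x)) (T.filter (fun x => G.Adj w x)) := by
      rw [Finset.disjoint_left]
      intro x hx1 hx2
      rw [Finset.mem_filter] at hx1 hx2
      exact htf {v, w, x} (SimpleGraph.is3Clique_triple_iff.mpr ⟨hvw, hx1.2, hx2.2⟩)
    have hsub : (T.filter (fun x => G.Adj v x)) ∪ (T.filter (fun x => G.Adj w x)) ⊆ T := by
      intro x hx
      rcases Finset.mem_union.mp hx with h | h <;> exact (Finset.mem_filter.mp h).1
    calc dT v + dT w
        = ((T.filter (fun x => G.Adj v x)) ∪ (T.filter (fun x => G.Adj w x))).card := by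
          rw [Finset.card_union_of_disjoint hdisj]
      _ ≤ T.card := Finset.card_le_card hsub
  set E := eSum G T T with hE
  set A := ∑ v ∈ T, (dT v) ^ 2 with hA
  have hE' : E = ∑ v ∈ T, dT v := by
    rw [hE]; unfold eSum; simp only [hdT]
  have swap : ∀ g : V → ℕ, (∑ v ∈ T, ∑ w ∈ T.filter (fun w => G.Adj v w), g v)
      = ∑ v ∈ T, ∑ w ∈ T.filter (fun w => G.Adj v w), g w := by
    intro g
    have h1 : ∀ v ∈ T, (∑ w ∈ T.filter (fun w => G.Adj v w), g v)
        = ∑ w ∈ T, if G.Adj v w then g v else 0 := by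
      intro v _; rw [Finset.sum_filter]
    have h2 : ∀ v ∈ T, (∑ w ∈ T.filter (fun w => G.Adj v w), g w)
        = ∑ w ∈ T, if G.Adj v w then g w else 0 := by
      intro v _; rw [Finset.sum_filter]
    rw [Finset.sum_congr rfl h1, Finset.sum_congr rfl h2, Finset.sum_comm]
    apply Finset.sum_congr rfl
    intro v _
    apply Finset.sum_congr rfl
    intro w _
    by_cases h : G.Adj v w
    · rw [if_pos h, if_pos h.symm]
    · rw [if_neg h, if_neg (fun hh => h hh.symm)]
  have hA1 : ∀ v ∈ T, (dT v)^2 = ∑ w ∈ T.filter (fun w => G.Adj v w), dT v := by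
    intro v _
    rw [Finset.sum_const, smul_eq_mul]
    simp only [hdT]
    rw [sq]
  have l1 : A = ∑ v ∈ T, ∑ w ∈ T.filter (fun w => G.Adj v w), dT v := by
    rw [hA]; exact Finset.sum_congr rfl hA1
  have l2 : A = ∑ v ∈ T, ∑ w ∈ T.filter (fun w => G.Adj v w), dT w := by
    rw [l1, swap]
  have l3 : (∑ v ∈ T, ∑ w ∈ T.filter (fun w => G.Adj v w), (dT v + dT w)) = A + A := by
    have hsplit : ∀ v ∈ T, (∑ w ∈ T.filter (fun w => G.Adj v w), (dT v + dT w))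
        = (∑ w ∈ T.filter (fun w => G.Adj v w), dT v)
          + (∑ w ∈ T.filter (fun w => G.Adj v w), dT w) :=
      fun v _ => Finset.sum_add_distrib
    rw [Finset.sum_congr rfl hsplit, Finset.sum_add_distrib, ← l1, ← l2]
  have h2A : A + A ≤ T.card * E := by
    rw [← l3]
    calc ∑ v ∈ T, ∑ w ∈ T.filter (fun w => G.Adj v w), (dT v + dT w)
        ≤ ∑ v ∈ T, ∑ w ∈ T.filter (fun w => G.Adj v w), T.card := by
          apply Finset.sum_le_sum
          intro v hv
          apply Finset.sum_le_sum
          intro w hw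
          rw [Finset.mem_filter] at hw
          exact key v hv w hw.1 hw.2
      _ = ∑ v ∈ T, T.card * dT v := by
          apply Finset.sum_congr rfl
          intro v _
          rw [Finset.sum_const, smul_eq_mul, mul_comm]
      _ = T.card * E := by rw [← Finset.mul_sum, hE']
  have hEsum : (E:ℤ) = ∑ v ∈ T, (dT v : ℤ) := by
    rw [hE']; push_cast; rfl
  have hCS : (E : ℤ)^2 ≤ (T.card : ℤ) * ∑ v ∈ T, ((dT v : ℤ))^2 := by
    rw [hEsum]
    exact sq_sum_le_card_mul_sum_sq
  have hCS' : E^2 ≤ T.card * A := by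
    have hcast : ((T.card * A : ℕ) : ℤ) = (T.card : ℤ) * ∑ v ∈ T, ((dT v : ℤ))^2 := by
      rw [hA]; push_cast; rfl
    have h9 : ((E^2 : ℕ) : ℤ) ≤ ((T.card * A : ℕ) : ℤ) := by
      rw [hcast]; push_cast; exact_mod_cast hCS
    exact_mod_cast h9
  rcases Nat.eq_zero_or_pos E with hE0 | hEpos
  · rw [hE0]; positivity
  · have step : (2 * E) * E ≤ T.card ^ 2 * E := by
      calc (2 * E) * E = 2 * E^2 := by ring
        _ ≤ 2 * (T.card * A) := Nat.mul_le_mul_left 2 hCS'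
        _ = T.card * (A + A) := by ring
        _ ≤ T.card * (T.card * E) := Nat.mul_le_mul_left _ h2A
        _ = T.card ^2 * E := by ring
    exact Nat.le_of_mul_le_mul_right step hEpos

/-- If `G` is a triangle-free `d`-regular graph with `n ≥ 4` vertices, then
`wd(G) > d - √n - 1`. -/
theorem weakDegeneracy_lower_bound_triangleFree {V : Type*} [Fintype V] (G : SimpleGraph V)
    [DecidableRel G.Adj] (d : ℕ) (hn : 4 ≤ Fintype.card V) (htf : G.CliqueFree 3)
    (hreg : G.IsRegularOfDegree d) :
    (d : ℝ) - Real.sqrt (Fintype.card V) - 1 < (weakDegeneracy G : ℝ) := by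
  set n := Fintype.card V with hn'
  -- weak degeneracy is attained
  have hex : WeaklyDegenerate G n := by
    refine lemC G n Finset.univ (by simp [hn']) _ ?_
    intro v _
    push_cast
    omega
  have hmem : WeaklyDegenerate G (weakDegeneracy G) :=
    Nat.sInf_mem (⟨n, hex⟩ : Set.Nonempty {d : ℕ | WeaklyDegenerate G d})
  set m := weakDegeneracy G with hm
  have hwd : WeakDegenOn G Finset.univ (fun _ => (m : ℤ)) := hmem
  have hsqrt_nonneg : (0:ℝ) ≤ Real.sqrt n := Real.sqrt_nonneg _
  by_cases hdm : d ≤ m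
  · have : (d : ℝ) ≤ m := by exact_mod_cast hdm
    linarith
  · push_neg at hdm   -- m < d
    -- key inequality for every t ≤ n
    have key : ∀ t : ℕ, t ≤ n → 4 * (t:ℤ) * ((d:ℤ) - m) ≤ (t:ℤ)^2 + 4 * n := by
      intro t ht
      obtain ⟨T, hTsub, hTcard, hT⟩ := lemA hwd (fun v _ => Int.natCast_nonneg m) t
        (by rw [Finset.card_univ]; exact ht)
      -- degree count:  eSum G T T + eSum G T (univ \ T) = t * d
      have hsplit : eSum G T T + eSum G T (Finset.univ \ T) = t * d := by
        rw [← hTcard]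
        apply eSum_degree_split
        intro v
        refine (card_filter_eq_of_iff (q := fun w => G.Adj v w)
          (h2 := fun w => inferInstanceAs (Decidable (G.Adj v w))) (fun x => Iff.rfl)).trans ?_
        rw [← SimpleGraph.neighborFinset_eq_filter]
        exact hreg v
      have hmantel : 2 * eSum G T T ≤ t^2 := by
        have := mantel htf T
        rwa [hTcard] at this
      have hsum : (∑ _v ∈ T, (m:ℤ)) = (t : ℤ) * m := by
        rw [Finset.sum_const, hTcard, nsmul_eq_mul]
      rw [hsum] at hT
      have hsplit' : (eSum G T (Finset.univ \ T) : ℤ) = (t:ℤ) * d - eSum G T T := by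
        have := congrArg (Nat.cast : ℕ → ℤ) hsplit
        push_cast at this
        linarith
      have hcardT : ((Finset.univ : Finset V).card : ℤ) = (n : ℤ) := by
        rw [Finset.card_univ]
      have hmantel' : 2 * (eSum G T T : ℤ) ≤ (t:ℤ)^2 := by exact_mod_cast hmantel
      rw [hsplit', hcardT] at hT
      linarith
    -- apply with t = n to get 2(d-m) ≤ n
    have h1 := key n le_rfl
    have hn4 : (4:ℤ) ≤ n := by exact_mod_cast hn
    have hdm' : (1:ℤ) ≤ (d:ℤ) - m := by
      have : (m:ℤ) < d := by exact_mod_cast hdm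
      omega
    have h2 : 2 * ((d:ℤ) - m) ≤ n := by nlinarith
    -- apply with t = 2(d - m)
    have ht2 : 2 * (d - m) ≤ n := by
      have : ((2 * (d - m) : ℕ) : ℤ) ≤ (n:ℤ) := by
        push_cast [Nat.cast_sub hdm.le]
        linarith
      exact_mod_cast this
    have h3 := key (2 * (d - m)) ht2
    have hcast : ((2 * (d - m) : ℕ) : ℤ) = 2 * ((d:ℤ) - m) := by
      push_cast [Nat.cast_sub hdm.le]
      ring
    rw [hcast] at h3
    have hsq : ((d:ℤ) - m)^2 ≤ (n:ℤ) := by nlinarith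
    -- move to ℝ
    have hsqR : ((d:ℝ) - m)^2 ≤ (n:ℝ) := by exact_mod_cast hsq
    have hle : (d:ℝ) - m ≤ Real.sqrt n := Real.le_sqrt_of_sq_le hsqR
    linarith

end WeakDeg
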